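/- Suppose T : L^∞(Ω,F) → ℝ satisfies T(0) = 0, is G-quasilinear, and is G-pointwise continuous. Then a countable union of irrelevant events in N_G is again in N_G. -/

import Mathlib

open Filter Topology MeasureTheory

/-- Bounded measurable real-valued functions w.r.t. a σ-algebra `mG`. -/
def BddMeas {Ω : Type*} (mG : MeasurableSpace Ω) (f : Ω → ℝ) : Prop :=
  Measurable[mG] f ∧ ∃ C : ℝ, ∀ ω, |f ω| ≤ C

/-- The class of irrelevant (null) events in `mG` for the functional `T`. -/
def NullG {Ω : Type*} (mG : MeasurableSpace Ω) (T : (Ω → ℝ) → ℝ) : Set (Set Ω) :=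
  {N | MeasurableSet[mG] N ∧ ∀ g₁ g₂ : Ω → ℝ, BddMeas mG g₁ → BddMeas mG g₂ →
    T (g₁ + N.indicator g₂) = T g₁}

/-- (G-Mo): `T` is `G`-monotone. -/
def GMo {Ω : Type*} (mG : MeasurableSpace Ω) (T : (Ω → ℝ) → ℝ) : Prop :=
  ∀ x y : ℝ, x < y → ∀ g : Ω → ℝ, BddMeas mG g → ∀ A : Set Ω,
    MeasurableSet[mG] A → A ∉ NullG mG T →
    T (A.indicator (fun _ => x) + Aᶜ.indicator g) <
      T (A.indicator (fun _ => y) + Aᶜ.indicator g)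

/-- (G-QL): `T` is `G`-quasilinear. -/
def GQL {Ω : Type*} (mG : MeasurableSpace Ω) (T : (Ω → ℝ) → ℝ) : Prop :=
  ∀ g₁ g₂ : Ω → ℝ, BddMeas mG g₁ → BddMeas mG g₂ → ∀ A : Set Ω, MeasurableSet[mG] A →
    (∃ gb : Ω → ℝ, BddMeas mG gb ∧
      T (A.indicator g₁ + Aᶜ.indicator gb) ≤ T (A.indicator g₂ + Aᶜ.indicator gb)) →
    ∀ g : Ω → ℝ, BddMeas mG g →
      T (A.indicator g₁ + Aᶜ.indicator g) ≤ T (A.indicator g₂ + Aᶜ.indicator g)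

/-- (G-PC): `T` is `G`-pointwise continuous. -/
def GPC {Ω : Type*} (mG : MeasurableSpace Ω) (T : (Ω → ℝ) → ℝ) : Prop :=
  ∀ (gn : ℕ → Ω → ℝ) (g : Ω → ℝ), (∀ n, BddMeas mG (gn n)) → BddMeas mG g →
    (∃ C : ℝ, ∀ n ω, |gn n ω| ≤ C) →
    (∀ ω, Tendsto (fun n => gn n ω) atTop (𝓝 (g ω))) →
    Tendsto (fun n => T (gn n)) atTop (𝓝 (T g))

/-- The sup norm of a bounded function. -/
noncomputable def supNorm {Ω : Type*} (f : Ω → ℝ) : ℝ := ⨆ ω, |f ω|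

/-- (G-PS): `T` is `G`-pasting at `f`. -/
def GPS {Ω : Type*} (mG : MeasurableSpace Ω) (T : (Ω → ℝ) → ℝ) (f : Ω → ℝ) : Prop :=
  ∀ A₁ A₂ : Set Ω, MeasurableSet[mG] A₁ → MeasurableSet[mG] A₂ → Disjoint A₁ A₂ →
    ∀ x₁ x₂ : ℝ, T (A₁.indicator f) = T (A₁.indicator fun _ => x₁) →
      T (A₂.indicator f) = T (A₂.indicator fun _ => x₂) →
      T (A₁.indicator f + A₂.indicator f) =
        T (A₁.indicator (fun _ => x₁) + A₂.indicator fun _ => x₂)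

/-- (G-NB): `T` is `G`-norm bounded at `f`. -/
def GNB {Ω : Type*} (mG : MeasurableSpace Ω) (T : (Ω → ℝ) → ℝ) (f : Ω → ℝ) : Prop :=
  ∀ A : Set Ω, MeasurableSet[mG] A →
    T (A.indicator fun _ => -(supNorm f)) ≤ T (A.indicator f) ∧
    T (A.indicator f) ≤ T (A.indicator fun _ => supNorm f)

lemma BddMeas.add {Ω : Type*} {mG : MeasurableSpace Ω} {f g : Ω → ℝ}
    (hf : BddMeas mG f) (hg : BddMeas mG g) : BddMeas mG (f + g) := by
  obtain ⟨hfm, Cf, hCf⟩ := hf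
  obtain ⟨hgm, Cg, hCg⟩ := hg
  exact ⟨hfm.add hgm, Cf + Cg, fun ω => (abs_add_le _ _).trans (add_le_add (hCf ω) (hCg ω))⟩

lemma BddMeas.indicator {Ω : Type*} {mG : MeasurableSpace Ω} {g : Ω → ℝ} {N : Set Ω}
    (hg : BddMeas mG g) (hN : MeasurableSet[mG] N) : BddMeas mG (N.indicator g) := by
  obtain ⟨hgm, C, hC⟩ := hg
  refine ⟨hgm.indicator hN, max C 0, fun ω => ?_⟩
  by_cases hω : ω ∈ N
  · rw [Set.indicator_of_mem hω]; exact (hC ω).trans (le_max_left _ _)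
  · rw [Set.indicator_of_notMem hω]; simp

lemma null_subset {Ω : Type*} {mG : MeasurableSpace Ω} {T : (Ω → ℝ) → ℝ} {N M : Set Ω}
    (hN : N ∈ NullG mG T) (hM : MeasurableSet[mG] M) (hsub : M ⊆ N) : M ∈ NullG mG T := by
  refine ⟨hM, fun g₁ g₂ h1 h2 => ?_⟩
  have key : M.indicator g₂ = N.indicator (M.indicator g₂) := by
    rw [Set.indicator_indicator, Set.inter_eq_right.mpr hsub]
  rw [key]
  exact hN.2 g₁ (M.indicator g₂) h1 (h2.indicator hM)

lemma null_union {Ω : Type*} {mG : MeasurableSpace Ω} {T : (Ω → ℝ) → ℝ} {N₁ N₂ : Set Ω}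
    (h1 : N₁ ∈ NullG mG T) (h2 : N₂ ∈ NullG mG T) : N₁ ∪ N₂ ∈ NullG mG T := by
  refine ⟨h1.1.union h2.1, fun g₁ g₂ hb1 hb2 => ?_⟩
  have key : (N₁ ∪ N₂).indicator g₂ = N₁.indicator g₂ + (N₂ \ N₁).indicator g₂ := by
    rw [← Set.union_diff_self, Set.indicator_union_of_disjoint disjoint_sdiff_self_right]; rfl
  have hnull : N₂ \ N₁ ∈ NullG mG T :=
    null_subset h2 (h2.1.diff h1.1) Set.diff_subset
  rw [key, ← add_assoc,
    hnull.2 (g₁ + N₁.indicator g₂) g₂ (hb1.add (hb2.indicator h1.1)) hb2,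
    h1.2 g₁ g₂ hb1 hb2]

theorem stmt5 {Ω : Type*} (mF mG : MeasurableSpace Ω) (hsub : mG ≤ mF)
    (T : (Ω → ℝ) → ℝ) (hT0 : T 0 = 0) (hQL : GQL mG T) (hPC : GPC mG T) :
    ∀ A : ℕ → Set Ω, (∀ n, A n ∈ NullG mG T) → (⋃ n, A n) ∈ NullG mG T := by
  intro A hA
  have hmeas : ∀ n, MeasurableSet[mG] (A n) := fun n => (hA n).1
  have hacc : ∀ n, Set.accumulate A n ∈ NullG mG T := by
    intro n
    induction n with
    | zero =>
      have : Set.accumulate A 0 = A 0 := by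
        ext ω; simp [Set.mem_accumulate, Nat.le_zero]
      rw [this]; exact hA 0
    | succ n ih =>
      have : Set.accumulate A (n+1) = Set.accumulate A n ∪ A (n+1) := by
        ext ω
        simp only [Set.mem_accumulate, Set.mem_union, Nat.le_add_one_iff]
        constructor
        · rintro ⟨y, hy | rfl, hmem⟩
          · exact Or.inl ⟨y, hy, hmem⟩
          · exact Or.inr hmem
        · rintro (⟨y, hy, hmem⟩ | hmem)
          · exact ⟨y, Or.inl hy, hmem⟩
          · exact ⟨n+1, Or.inr rfl, hmem⟩
      rw [this]; exact null_union ih (hA (n+1))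
  have hUm : MeasurableSet[mG] (⋃ n, A n) := by
    rw [← Set.iUnion_accumulate]
    exact MeasurableSet.iUnion fun n => (hacc n).1
  refine ⟨hUm, fun g₁ g₂ hb1 hb2 => ?_⟩
  obtain ⟨hgm1, C₁, hC₁⟩ := hb1
  obtain ⟨hgm2, C₂, hC₂⟩ := hb2
  have hb1' : BddMeas mG g₁ := ⟨hgm1, C₁, hC₁⟩
  have hb2' : BddMeas mG g₂ := ⟨hgm2, C₂, hC₂⟩
  set gn : ℕ → Ω → ℝ := fun n => g₁ + (Set.accumulate A n).indicator g₂ with hgn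
  have hbn : ∀ n, BddMeas mG (gn n) := fun n =>
    hb1'.add (hb2'.indicator (hacc n).1)
  have hbU : BddMeas mG (g₁ + (⋃ n, A n).indicator g₂) :=
    hb1'.add (hb2'.indicator hUm)
  have hunif : ∃ C : ℝ, ∀ n ω, |gn n ω| ≤ C := by
    refine ⟨C₁ + max C₂ 0, fun n ω => ?_⟩
    have : |(Set.accumulate A n).indicator g₂ ω| ≤ max C₂ 0 := by
      by_cases hω : ω ∈ Set.accumulate A n
      · rw [Set.indicator_of_mem hω]; exact (hC₂ ω).trans (le_max_left _ _)
      · rw [Set.indicator_of_notMem hω]; simp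
    calc |gn n ω| ≤ |g₁ ω| + |(Set.accumulate A n).indicator g₂ ω| := abs_add_le _ _
      _ ≤ C₁ + max C₂ 0 := add_le_add (hC₁ ω) this
  have hptw : ∀ ω, Tendsto (fun n => gn n ω) atTop
      (𝓝 ((g₁ + (⋃ n, A n).indicator g₂) ω)) := by
    intro ω
    by_cases hω : ω ∈ ⋃ n, A n
    · obtain ⟨m, hm⟩ := Set.mem_iUnion.mp hω
      have heven : ∀ n ≥ m, gn n ω = g₁ ω + g₂ ω := by
        intro n hn
        have : ω ∈ Set.accumulate A n :=
          Set.monotone_accumulate hn (Set.subset_accumulate hm)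
        simp [hgn, Set.indicator_of_mem this]
      have : (g₁ + (⋃ n, A n).indicator g₂) ω = g₁ ω + g₂ ω := by
        simp [Set.indicator_of_mem hω]
      rw [this]
      exact tendsto_atTop_of_eventually_const heven
    · have hωn : ∀ n, ω ∉ Set.accumulate A n := fun n hc =>
        hω (Set.accumulate_subset_iUnion n hc)
      have : (g₁ + (⋃ n, A n).indicator g₂) ω = g₁ ω := by
        simp [Set.indicator_of_notMem hω]
      rw [this]
      have heq : ∀ n, gn n ω = g₁ ω := fun n => by
        simp [hgn, Set.indicator_of_notMem (hωn n)]
      simp only [heq]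
      exact tendsto_const_nhds
  have hlim := hPC gn (g₁ + (⋃ n, A n).indicator g₂) hbn hbU hunif hptw
  have hconst : ∀ n, T (gn n) = T g₁ := fun n =>
    (hacc n).2 g₁ g₂ hb1' hb2'
  simp only [hconst] at hlim
  exact (tendsto_nhds_unique tendsto_const_nhds hlim).symm
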